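/- For 0 < a ≤ 1, define l_a(z) = (log(e^{z−1} + 1) + log(e^{1−z} + 1))^a. Then at z = 1 one has l_a''(1) = (a/2)·(2 log 2)^{a−1}, l_a'''(1) = 0, l_a''''(1) = (a/4)·(−(2 log 2)^{a−1} + 3(a−1)·(2 log 2)^{a−2}), and consequently the product-stability satisfies the exact formula α_{l_a}(1) = 3(l_a'''(1))² − l_a''''(1)·l_a''(1) = (a²/8)·(2 log 2)^{2a−3}·(2 log 2 − 3(a−1)), which is strictly positive. -/

import Mathlib

open Real

noncomputable def drT (z : ℝ) : ℝ := Real.tanh ((z - 1) / 2)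
noncomputable def drg (z : ℝ) : ℝ := 2 * Real.log (2 * Real.cosh ((z - 1) / 2))
noncomputable def drL1 (a z : ℝ) : ℝ := a * drg z ^ (a - 1) * drT z
noncomputable def drL2 (a z : ℝ) : ℝ :=
  a * (a - 1) * drg z ^ (a - 2) * drT z ^ 2 + a * drg z ^ (a - 1) * ((1 - drT z ^ 2) / 2)
noncomputable def drL3 (a z : ℝ) : ℝ :=
  a * (a - 1) * (a - 2) * drg z ^ (a - 3) * drT z ^ 3
    + 3 * a * (a - 1) * drg z ^ (a - 2) * drT z * ((1 - drT z ^ 2) / 2)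
    + a * drg z ^ (a - 1) * (-(drT z * (1 - drT z ^ 2)) / 2)
noncomputable def drL4 (a z : ℝ) : ℝ :=
  a * (a - 1) * (a - 2) * (a - 3) * drg z ^ (a - 4) * drT z ^ 4
    + 6 * a * (a - 1) * (a - 2) * drg z ^ (a - 3) * drT z ^ 2 * ((1 - drT z ^ 2) / 2)
    + a * (a - 1) * drg z ^ (a - 2) *
        (3 * ((1 - drT z ^ 2) / 2) ^ 2 + 4 * drT z * (-(drT z * (1 - drT z ^ 2)) / 2))
    + a * drg z ^ (a - 1) * (-((1 - drT z ^ 2) * (1 - 3 * drT z ^ 2)) / 4)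

lemma drg_pos (z : ℝ) : 0 < drg z := by
  have h : 1 < 2 * Real.cosh ((z - 1) / 2) := by
    have := Real.one_le_cosh ((z - 1) / 2); linarith
  have := Real.log_pos h
  unfold drg; linarith

lemma dr_inner (z : ℝ) : HasDerivAt (fun z : ℝ => (z - 1) / 2) (1 / 2) z := by
  simpa using ((hasDerivAt_id z).sub_const 1).div_const 2

lemma drT_hasDeriv (z : ℝ) : HasDerivAt drT ((1 - drT z ^ 2) / 2) z := by
  have hc : ∀ x : ℝ, Real.cosh ((x - 1) / 2) ≠ 0 := fun x => ne_of_gt (Real.cosh_pos _)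
  have hs : HasDerivAt (fun z : ℝ => Real.sinh ((z - 1) / 2))
      (Real.cosh ((z - 1) / 2) * (1 / 2)) z :=
    (Real.hasDerivAt_sinh _).comp z (dr_inner z)
  have hco : HasDerivAt (fun z : ℝ => Real.cosh ((z - 1) / 2))
      (Real.sinh ((z - 1) / 2) * (1 / 2)) z :=
    (Real.hasDerivAt_cosh _).comp z (dr_inner z)
  have hdiv := hs.div hco (hc z)
  have heq : drT = fun z : ℝ => Real.sinh ((z - 1) / 2) / Real.cosh ((z - 1) / 2) := by
    funext x; simp [drT, Real.tanh_eq_sinh_div_cosh]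
  rw [heq]
  refine hdiv.congr_deriv ?_
  have h1 : Real.cosh ((z - 1) / 2) ^ 2 - Real.sinh ((z - 1) / 2) ^ 2 = 1 :=
    Real.cosh_sq_sub_sinh_sq _
  have h2 := hc z
  simp only [drT, Real.tanh_eq_sinh_div_cosh]
  field_simp

lemma drg_hasDeriv (z : ℝ) : HasDerivAt drg (drT z) z := by
  have hco : HasDerivAt (fun z : ℝ => 2 * Real.cosh ((z - 1) / 2))
      (2 * (Real.sinh ((z - 1) / 2) * (1 / 2))) z :=
    (((Real.hasDerivAt_cosh _).comp z (dr_inner z))).const_mul 2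
  have hne : 2 * Real.cosh ((z - 1) / 2) ≠ 0 := by positivity
  have hlog := hco.log hne
  have := hlog.const_mul 2
  have heq : drg = fun z : ℝ => 2 * Real.log (2 * Real.cosh ((z - 1) / 2)) := rfl
  rw [heq]
  refine this.congr_deriv ?_
  have h2 : Real.cosh ((z - 1) / 2) ≠ 0 := ne_of_gt (Real.cosh_pos _)
  simp only [drT, Real.tanh_eq_sinh_div_cosh]
  field_simp

lemma drg_rpow_hasDeriv (p : ℝ) (z : ℝ) :
    HasDerivAt (fun z : ℝ => drg z ^ p) (p * drg z ^ (p - 1) * drT z) z := by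
  have h := (Real.hasDerivAt_rpow_const (p := p) (Or.inl (drg_pos z).ne')).comp z
    (drg_hasDeriv z)
  exact h.congr_deriv (by ring)

lemma drL_chain (a : ℝ) (z : ℝ) :
    HasDerivAt (fun z => drg z ^ a) (drL1 a z) z ∧
    HasDerivAt (drL1 a) (drL2 a z) z ∧
    HasDerivAt (drL2 a) (drL3 a z) z ∧
    HasDerivAt (drL3 a) (drL4 a z) z := by
  have e1 : a - 1 - 1 = a - 2 := by ring
  have e2 : a - 2 - 1 = a - 3 := by ring
  have e3 : a - 3 - 1 = a - 4 := by ring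
  have hT := drT_hasDeriv z
  -- squared tanh derivative
  have hT2 : HasDerivAt (fun z => drT z ^ 2) (2 * drT z * ((1 - drT z ^ 2) / 2)) z := by
    simpa using hT.fun_pow 2
  have hT3 : HasDerivAt (fun z => drT z ^ 3) (3 * drT z ^ 2 * ((1 - drT z ^ 2) / 2)) z := by
    simpa using hT.fun_pow 3
  have hT4 : HasDerivAt (fun z => drT z ^ 4) (4 * drT z ^ 3 * ((1 - drT z ^ 2) / 2)) z := by
    simpa using hT.fun_pow 4
  have hG2 : HasDerivAt (fun z => (1 - drT z ^ 2) / 2)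
      (-(2 * drT z * ((1 - drT z ^ 2) / 2)) / 2) z := (hT2.const_sub 1).div_const 2
  have hG3 : HasDerivAt (fun z => -(drT z * (1 - drT z ^ 2)) / 2)
      (-((((1 - drT z ^ 2) / 2) * (1 - drT z ^ 2)) +
          drT z * (-(2 * drT z * ((1 - drT z ^ 2) / 2)))) / 2) z := by
    have hmul : HasDerivAt (fun z => drT z * (1 - drT z ^ 2))
        ((((1 - drT z ^ 2) / 2) * (1 - drT z ^ 2)) +
          drT z * (-(2 * drT z * ((1 - drT z ^ 2) / 2)))) z := by
      have := hT.fun_mul (hT2.const_sub 1)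
      simpa using this
    simpa using hmul.neg.div_const 2
  have hr1 := drg_rpow_hasDeriv a z
  have hr2 := drg_rpow_hasDeriv (a - 1) z
  have hr3 := drg_rpow_hasDeriv (a - 2) z
  have hr4 := drg_rpow_hasDeriv (a - 3) z
  rw [e1] at hr2; rw [e2] at hr3; rw [e3] at hr4
  refine ⟨?_, ?_, ?_, ?_⟩
  · exact hr1
  · have h := ((hr2.const_mul a).mul hT)
    have heq : drL1 a = fun z => (a * drg z ^ (a - 1)) * drT z := by
      funext x; unfold drL1; ring
    rw [heq]
    refine h.congr_deriv ?_
    unfold drL2; ring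
  · have hA := ((hr3.const_mul (a * (a - 1))).mul hT2)
    have hB := ((hr2.const_mul a).mul hG2)
    have heq : drL2 a = fun z =>
        (a * (a - 1) * drg z ^ (a - 2)) * drT z ^ 2
          + (a * drg z ^ (a - 1)) * ((1 - drT z ^ 2) / 2) := by
      funext x; unfold drL2; ring
    rw [heq]
    refine (hA.add hB).congr_deriv ?_
    unfold drL3; ring
  · have hA := ((hr4.const_mul (a * (a - 1) * (a - 2))).mul hT3)
    have hB := (((hr3.const_mul (3 * a * (a - 1))).fun_mul hT).fun_mul hG2)
    have hC := ((hr2.const_mul a).mul hG3)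
    have heq : drL3 a = fun z =>
        ((a * (a - 1) * (a - 2) * drg z ^ (a - 3)) * drT z ^ 3)
          + (((3 * a * (a - 1) * drg z ^ (a - 2)) * drT z) * ((1 - drT z ^ 2) / 2))
          + ((a * drg z ^ (a - 1)) * (-(drT z * (1 - drT z ^ 2)) / 2)) := by
      funext x; unfold drL3; ring
    rw [heq]
    refine ((hA.add hB).add hC).congr_deriv ?_
    unfold drL4; ring

lemma dr_rewrite (z : ℝ) :
    Real.log (Real.exp (z - 1) + 1) + Real.log (Real.exp (1 - z) + 1) = drg z := by
  have h1 : (0 : ℝ) < Real.exp (z - 1) + 1 := by positivity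
  have h2 : (0 : ℝ) < Real.exp (1 - z) + 1 := by positivity
  have hc : (0 : ℝ) < 2 * Real.cosh ((z - 1) / 2) := by positivity
  have key : (Real.exp (z - 1) + 1) * (Real.exp (1 - z) + 1)
      = (2 * Real.cosh ((z - 1) / 2)) ^ 2 := by
    have e1 : Real.exp (z - 1) = Real.exp ((z - 1) / 2) * Real.exp ((z - 1) / 2) := by
      rw [← Real.exp_add]; ring_nf
    have e2 : Real.exp (1 - z) = Real.exp (-((z - 1) / 2)) * Real.exp (-((z - 1) / 2)) := by
      rw [← Real.exp_add]; ring_nf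
    have e3 : Real.exp ((z - 1) / 2) * Real.exp (-((z - 1) / 2)) = 1 := by
      rw [← Real.exp_add]; simp
    rw [Real.cosh_eq, e1, e2]
    nlinarith [e3]
  calc Real.log (Real.exp (z - 1) + 1) + Real.log (Real.exp (1 - z) + 1)
      = Real.log ((Real.exp (z - 1) + 1) * (Real.exp (1 - z) + 1)) := by
        rw [Real.log_mul h1.ne' h2.ne']
    _ = Real.log ((2 * Real.cosh ((z - 1) / 2)) ^ 2) := by rw [key]
    _ = 2 * Real.log (2 * Real.cosh ((z - 1) / 2)) := by
        rw [Real.log_pow]; push_cast; ring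
    _ = drg z := rfl

/-- Exact values of the derivatives at `z = 1` of
`l_a(z) = (log(e^{z−1} + 1) + log(e^{1−z} + 1))^a` for `a ∈ (0,1]`, and the resulting
exact (strictly positive) product-stability formula. -/
theorem degree_of_regularity_loss_derivative_formulas
    (a : ℝ) (ha0 : 0 < a) (ha1 : a ≤ 1)
    (l : ℝ → ℝ)
    (hl : ∀ z : ℝ,
      l z = (Real.log (Real.exp (z - 1) + 1) + Real.log (Real.exp (1 - z) + 1)) ^ a) :
    iteratedDeriv 2 l 1 = (a / 2) * (2 * Real.log 2) ^ (a - 1) ∧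
    iteratedDeriv 3 l 1 = 0 ∧
    iteratedDeriv 4 l 1 =
      (a / 4) * (-(2 * Real.log 2) ^ (a - 1) + 3 * (a - 1) * (2 * Real.log 2) ^ (a - 2)) ∧
    3 * (iteratedDeriv 3 l 1) ^ 2 - iteratedDeriv 4 l 1 * iteratedDeriv 2 l 1 =
      (a ^ 2 / 8) * (2 * Real.log 2) ^ (2 * a - 3) * (2 * Real.log 2 - 3 * (a - 1)) ∧
    0 < (a ^ 2 / 8) * (2 * Real.log 2) ^ (2 * a - 3) * (2 * Real.log 2 - 3 * (a - 1)) := by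
  have hlg : l = fun z => drg z ^ a := by
    funext z; rw [hl z, dr_rewrite z]
  have d0 : deriv l = drL1 a := by
    funext z; rw [hlg]; exact ((drL_chain a z).1).deriv
  have d1 : deriv (drL1 a) = drL2 a := funext fun z => ((drL_chain a z).2.1).deriv
  have d2 : deriv (drL2 a) = drL3 a := funext fun z => ((drL_chain a z).2.2.1).deriv
  have d3 : deriv (drL3 a) = drL4 a := funext fun z => ((drL_chain a z).2.2.2).deriv
  have i2 : iteratedDeriv 2 l = drL2 a := by
    rw [show (2 : ℕ) = 0 + 1 + 1 from rfl, iteratedDeriv_succ, iteratedDeriv_succ,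
      iteratedDeriv_zero, d0, d1]
  have i3 : iteratedDeriv 3 l = drL3 a := by
    rw [show (3 : ℕ) = 2 + 1 from rfl, iteratedDeriv_succ, i2, d2]
  have i4 : iteratedDeriv 4 l = drL4 a := by
    rw [show (4 : ℕ) = 3 + 1 from rfl, iteratedDeriv_succ, i3, d3]
  have hT1 : drT 1 = 0 := by simp [drT]
  have hg1 : drg 1 = 2 * Real.log 2 := by simp [drg]
  set u : ℝ := 2 * Real.log 2 with hu
  have hupos : 0 < u := by
    have : 0 < Real.log 2 := Real.log_pos (by norm_num)
    rw [hu]; linarith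
  have v2 : iteratedDeriv 2 l 1 = (a / 2) * u ^ (a - 1) := by
    rw [i2]; unfold drL2; rw [hT1, hg1]; ring
  have v3 : iteratedDeriv 3 l 1 = 0 := by
    rw [i3]; unfold drL3; rw [hT1]; ring
  have v4 : iteratedDeriv 4 l 1 =
      (a / 4) * (-u ^ (a - 1) + 3 * (a - 1) * u ^ (a - 2)) := by
    rw [i4]; unfold drL4; rw [hT1, hg1]; ring
  refine ⟨v2, v3, v4, ?_, ?_⟩
  · rw [v2, v3, v4]
    have r1 : u ^ (a - 1) * u ^ (a - 1) = u ^ (2 * a - 3) * u := by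
      rw [← Real.rpow_add hupos, show (a - 1) + (a - 1) = (2 * a - 3) + 1 by ring,
        Real.rpow_add hupos, Real.rpow_one]
    have r2 : u ^ (a - 2) * u ^ (a - 1) = u ^ (2 * a - 3) := by
      rw [← Real.rpow_add hupos]; ring_nf
    linear_combination (a ^ 2 / 8) * r1 - (3 * (a - 1) * a ^ 2 / 8) * r2
  · have h1 : 0 < a ^ 2 / 8 := by positivity
    have h2 : 0 < u ^ (2 * a - 3) := Real.rpow_pos_of_pos hupos _
    have h3 : 0 < u - 3 * (a - 1) := by nlinarith
    positivity
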